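/- Let G be the golden ratio and let B = B(a_1,...,a_r) be a block of the form 1(01)^{a_1}(00)^{a_2}⋯ or 1(00)^{a_1}(01)^{a_2}⋯ with natural number parameters a_1,...,a_r. Then the cardinality of the equivalence class of B under golden-ratio value-equivalence equals p_r + q_r, where p_r/q_r is the value of the finite continued fraction [a_1,...,a_r]. -/

import Mathlib

/-- The value `Σ_{i=1}^n w_i G^{-i}` of a finite 0-1 word in base the golden ratio. -/
noncomputable def goldenVal (w : List ℕ) : ℝ :=
  ∑ i ∈ Finset.range w.length, (w.getD i 0 : ℝ) / ((1 + Real.sqrt 5) / 2) ^ (i + 1)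

/-- `c(w)`: the number of 0-1 words of the same length as `w` representing the same
value in base the golden ratio. -/
noncomputable def eqClassCard (w : List ℕ) : ℕ :=
  Set.ncard {w' : List ℕ | w'.length = w.length ∧ (∀ x ∈ w', x ≤ 1) ∧
    goldenVal w' = goldenVal w}

/-- The chunks `(01)^{a_1}(00)^{a_2}⋯` (if `t = true` the first chunk is of type `01`,
otherwise of type `00`; the types alternate). -/
def blockChunks : Bool → List ℕ → List ℕ
  | _, [] => []
  | t, a :: rest =>
      (List.replicate a (if t then [0, 1] else [0, 0])).flatten ++ blockChunks (!t) rest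

/-- The block `B(a_1,…,a_r) = 1(01)^{a_1}(00)^{a_2}⋯` or `1(00)^{a_1}(01)^{a_2}⋯`. -/
def blockWord (t : Bool) (as : List ℕ) : List ℕ := 1 :: blockChunks t as

/-- The continuant: `[a_1,…,a_r] = cont (tail) / cont (whole)` in lowest terms. -/
def cont : List ℕ → ℕ
  | [] => 1
  | [a] => a
  | a :: b :: rest => a * cont (b :: rest) + cont rest

noncomputable def gr : ℝ := (1 + Real.sqrt 5) / 2

lemma sqrt5_sq : Real.sqrt 5 ^ 2 = 5 := Real.sq_sqrt (by norm_num)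

lemma sqrt5_gt : (2:ℝ) < Real.sqrt 5 := by
  have := sqrt5_sq
  nlinarith [Real.sqrt_nonneg 5]

lemma sqrt5_lt : Real.sqrt 5 < 3 := by
  have := sqrt5_sq
  nlinarith [Real.sqrt_nonneg 5]

lemma gr_gt_one : 1 < gr := by unfold gr; linarith [sqrt5_gt]
lemma gr_pos : 0 < gr := lt_trans one_pos gr_gt_one
lemma gr_ne : gr ≠ 0 := ne_of_gt gr_pos
lemma gr_le_two : gr ≤ 2 := by unfold gr; linarith [sqrt5_lt]
lemma gr_sq : gr ^ 2 = gr + 1 := by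
  unfold gr; have := sqrt5_sq; ring_nf; nlinarith [sqrt5_sq]

lemma goldenVal_eq (w : List ℕ) :
    goldenVal w = ∑ i ∈ Finset.range w.length, (w.getD i 0 : ℝ) / gr ^ (i + 1) := rfl

lemma goldenVal_nil : goldenVal [] = 0 := by simp [goldenVal]

lemma goldenVal_cons (b : ℕ) (w : List ℕ) :
    goldenVal (b :: w) = ((b : ℝ) + goldenVal w) / gr := by
  rw [goldenVal_eq]
  show (∑ i ∈ Finset.range (w.length + 1), ((b::w).getD i 0 : ℝ) / gr ^ (i+1)) = _
  rw [Finset.sum_range_succ']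
  simp only [List.getD_cons_succ, List.getD_cons_zero]
  have h : ∀ i ∈ Finset.range w.length,
      (w.getD i 0 : ℝ) / gr ^ (i + 1 + 1) = (w.getD i 0 : ℝ) / gr ^ (i+1) / gr := by
    intro i _; rw [pow_succ, div_div]
  rw [Finset.sum_congr rfl h, ← Finset.sum_div, goldenVal_eq]
  rw [pow_one, ← add_div, add_comm]

lemma goldenVal_nonneg (w : List ℕ) : 0 ≤ goldenVal w := by
  rw [goldenVal_eq]
  exact Finset.sum_nonneg fun i _ => div_nonneg (Nat.cast_nonneg _) (pow_nonneg gr_pos.le _)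

lemma goldenVal_lt (w : List ℕ) (h : ∀ x ∈ w, x ≤ 1) : goldenVal w < gr := by
  induction w with
  | nil => rw [goldenVal_nil]; exact gr_pos
  | cons b w ih =>
    have hb : (b:ℝ) ≤ 1 := by
      exact_mod_cast h b List.mem_cons_self
    have hw := ih (fun x hx => h x (List.mem_cons_of_mem b hx))
    rw [goldenVal_cons, div_lt_iff₀ gr_pos]
    nlinarith [gr_sq, gr_pos]

/-- Finiteness of the set of 0-1 words of a given length. -/
lemma finite_words (m : ℕ) : {w : List ℕ | w.length = m ∧ ∀ x ∈ w, x ≤ 1}.Finite := by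
  induction m with
  | zero =>
    apply Set.Finite.subset (Set.finite_singleton ([] : List ℕ))
    rintro w ⟨hl, -⟩
    simp [List.length_eq_zero_iff.mp hl]
  | succ m ih =>
    apply Set.Finite.subset (Set.Finite.image2 List.cons
      ((Set.finite_singleton 0).insert 1) ih)
    rintro w ⟨hl, h01⟩
    match w with
    | [] => simp at hl
    | b :: w' =>
      refine Set.mem_image2.mpr ⟨b, ?_, w', ⟨?_, ?_⟩, rfl⟩
      · have := h01 b List.mem_cons_self; interval_cases b <;> simp
      · simpa using hl
      · exact fun x hx => h01 x (List.mem_cons_of_mem b hx)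

noncomputable def Nc (m : ℕ) (x : ℝ) : ℕ :=
  Set.ncard {w : List ℕ | w.length = m ∧ (∀ a ∈ w, a ≤ 1) ∧ goldenVal w = x}

lemma Nc_set_finite (m : ℕ) (x : ℝ) :
    {w : List ℕ | w.length = m ∧ (∀ a ∈ w, a ≤ 1) ∧ goldenVal w = x}.Finite :=
  (finite_words m).subset (fun w ⟨h1, h2, _⟩ => ⟨h1, h2⟩)

lemma Nc_succ (m : ℕ) (x : ℝ) : Nc (m+1) x = Nc m (gr*x) + Nc m (gr*x - 1) := by
  have key : {w : List ℕ | w.length = m+1 ∧ (∀ a ∈ w, a ≤ 1) ∧ goldenVal w = x}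
      = (List.cons 0 '' {w : List ℕ | w.length = m ∧ (∀ a ∈ w, a ≤ 1) ∧ goldenVal w = gr*x})
        ∪ (List.cons 1 '' {w : List ℕ | w.length = m ∧ (∀ a ∈ w, a ≤ 1) ∧ goldenVal w = gr*x - 1}) := by
    ext w
    constructor
    · rintro ⟨hl, h01, hv⟩
      match w with
      | [] => simp at hl
      | b :: w' =>
        have hb := h01 b List.mem_cons_self
        have hl' : w'.length = m := by simpa using hl
        have h01' : ∀ a ∈ w', a ≤ 1 := fun a ha => h01 a (List.mem_cons_of_mem b ha)
        rw [goldenVal_cons, div_eq_iff gr_ne] at hv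
        interval_cases b
        · left
          exact ⟨w', ⟨hl', h01', by push_cast at hv; linarith⟩, rfl⟩
        · right
          exact ⟨w', ⟨hl', h01', by push_cast at hv; linarith⟩, rfl⟩
    · rintro (⟨w', ⟨hl', h01', hv'⟩, rfl⟩ | ⟨w', ⟨hl', h01', hv'⟩, rfl⟩) <;>
      · refine ⟨by simpa using hl', ?_, ?_⟩
        · intro a ha
          rcases List.mem_cons.mp ha with h | h
          · omega
          · exact h01' a h
        · rw [goldenVal_cons, hv', div_eq_iff gr_ne]; push_cast; ring
  unfold Nc
  rw [key, Set.ncard_union_eq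
      (Set.disjoint_left.mpr (by rintro w ⟨u, -, rfl⟩ ⟨v, -, hv⟩; simp at hv))
      ((Nc_set_finite m _).image _) ((Nc_set_finite m _).image _),
    Set.ncard_image_of_injective _ (List.cons_injective),
    Set.ncard_image_of_injective _ (List.cons_injective)]

lemma Nc_zero_of_neg (m : ℕ) (x : ℝ) (hx : x < 0) : Nc m x = 0 := by
  unfold Nc
  convert Set.ncard_empty (List ℕ)
  ext w
  simp only [Set.mem_setOf_eq, Set.mem_empty_iff_false, iff_false]
  rintro ⟨-, -, hv⟩
  exact absurd (hv ▸ goldenVal_nonneg w) (not_le.mpr hx)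

lemma Nc_zero_of_ge (m : ℕ) (x : ℝ) (hx : gr ≤ x) : Nc m x = 0 := by
  unfold Nc
  convert Set.ncard_empty (List ℕ)
  ext w
  simp only [Set.mem_setOf_eq, Set.mem_empty_iff_false, iff_false]
  rintro ⟨-, h01, hv⟩
  exact absurd (hv ▸ goldenVal_lt w h01) (not_lt.mpr hx)

lemma Nc_zero_zero : Nc 0 0 = 1 := by
  unfold Nc
  convert Set.ncard_singleton ([] : List ℕ)
  ext w
  simp only [Set.mem_setOf_eq, Set.mem_singleton_iff]
  constructor
  · rintro ⟨hl, -, -⟩; exact List.length_eq_zero_iff.mp hl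
  · rintro rfl; exact ⟨rfl, by simp, goldenVal_nil⟩

lemma Nc_zero_of_ne (x : ℝ) (hx : x ≠ 0) : Nc 0 x = 0 := by
  unfold Nc
  convert Set.ncard_empty (List ℕ)
  ext w
  simp only [Set.mem_setOf_eq, Set.mem_empty_iff_false, iff_false]
  rintro ⟨hl, -, hv⟩
  rw [List.length_eq_zero_iff.mp hl, goldenVal_nil] at hv
  exact hx hv.symm

/-! ### The five state functions -/

noncomputable def FF (s : List ℕ) : ℕ := Nc s.length (goldenVal s)
noncomputable def UU (s : List ℕ) : ℕ := Nc s.length (goldenVal s + 1)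
noncomputable def DD (s : List ℕ) : ℕ := Nc s.length (goldenVal s - 1)
noncomputable def PP (s : List ℕ) : ℕ := Nc s.length (goldenVal s + (gr - 1))
noncomputable def QQ (s : List ℕ) : ℕ := Nc s.length (goldenVal s - (gr - 1))

lemma FF_nil : FF [] = 1 := by rw [FF, goldenVal_nil]; exact Nc_zero_zero
lemma UU_nil : UU [] = 0 := by
  rw [UU, goldenVal_nil]; exact Nc_zero_of_ne _ (by norm_num)
lemma DD_nil : DD [] = 0 := by
  rw [DD, goldenVal_nil]; exact Nc_zero_of_ne _ (by norm_num)
lemma PP_nil : PP [] = 0 := by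
  rw [PP, goldenVal_nil]
  exact Nc_zero_of_ne _ (by have := gr_gt_one; intro h; simp at h; linarith)
lemma QQ_nil : QQ [] = 0 := by
  rw [QQ, goldenVal_nil]
  exact Nc_zero_of_ne _ (by have := gr_gt_one; intro h; simp at h; linarith)

section Steps
variable (s : List ℕ)

lemma len_cons (b : ℕ) : (b :: s).length = s.length + 1 := rfl

lemma gr_mul_val_cons (b : ℕ) : gr * goldenVal (b :: s) = (b : ℝ) + goldenVal s := by
  rw [goldenVal_cons, mul_div_cancel₀ _ gr_ne]

lemma FF_cons0 : FF (0 :: s) = FF s + DD s := by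
  rw [FF, len_cons, Nc_succ, gr_mul_val_cons]
  norm_num [FF, DD]

lemma FF_cons1 : FF (1 :: s) = UU s + FF s := by
  rw [FF, len_cons, Nc_succ, gr_mul_val_cons]
  norm_num [FF, UU, add_comm (goldenVal s) 1]

lemma UU_cons0 : UU (0 :: s) = PP s := by
  rw [UU, len_cons, Nc_succ, mul_add, gr_mul_val_cons, mul_one]
  rw [Nc_zero_of_ge _ _ (by push_cast; linarith [goldenVal_nonneg s])]
  rw [show (0:ℕ) + goldenVal s + gr - 1 = goldenVal s + (gr - 1) by push_cast; ring]
  rw [PP]; omega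

lemma UU_cons1 : UU (1 :: s) = 0 := by
  rw [UU, len_cons, Nc_succ, mul_add, gr_mul_val_cons, mul_one]
  rw [Nc_zero_of_ge _ _ (by push_cast; linarith [goldenVal_nonneg s])]
  rw [Nc_zero_of_ge _ _ (by push_cast; linarith [goldenVal_nonneg s])]

lemma DD_cons0 (h01 : ∀ x ∈ s, x ≤ 1) : DD (0 :: s) = 0 := by
  have hlt := goldenVal_lt s h01
  rw [DD, len_cons, Nc_succ, mul_sub, gr_mul_val_cons, mul_one]
  rw [Nc_zero_of_neg _ _ (by push_cast; linarith)]
  rw [Nc_zero_of_neg _ _ (by push_cast; linarith)]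

lemma DD_cons1 (h01 : ∀ x ∈ s, x ≤ 1) : DD (1 :: s) = QQ s := by
  have hlt := goldenVal_lt s h01
  rw [DD, len_cons, Nc_succ, mul_sub, gr_mul_val_cons, mul_one]
  rw [show (1:ℕ) + goldenVal s - gr = goldenVal s - (gr - 1) by push_cast; ring]
  rw [Nc_zero_of_neg s.length (goldenVal s - (gr - 1) - 1) (by linarith)]
  rw [QQ]; omega

lemma PP_cons0 : PP (0 :: s) = UU s + FF s := by
  have h := gr_sq
  rw [PP, len_cons, Nc_succ, mul_add, gr_mul_val_cons]
  rw [show (0:ℕ) + goldenVal s + gr * (gr - 1) = goldenVal s + 1 by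
    push_cast; nlinarith]
  norm_num [FF, UU]

lemma PP_cons1 : PP (1 :: s) = UU s := by
  have h := gr_sq
  have h2 := gr_le_two
  rw [PP, len_cons, Nc_succ, mul_add, gr_mul_val_cons]
  rw [show (1:ℕ) + goldenVal s + gr * (gr - 1) = goldenVal s + 2 by
    push_cast; nlinarith]
  rw [Nc_zero_of_ge _ _ (by linarith [goldenVal_nonneg s])]
  rw [show goldenVal s + 2 - 1 = goldenVal s + 1 by ring]
  rw [UU]; omega

lemma QQ_cons0 (h01 : ∀ x ∈ s, x ≤ 1) : QQ (0 :: s) = DD s := by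
  have h := gr_sq
  have hlt := goldenVal_lt s h01
  have h2 := gr_le_two
  rw [QQ, len_cons, Nc_succ, mul_sub, gr_mul_val_cons]
  rw [show (0:ℕ) + goldenVal s - gr * (gr - 1) = goldenVal s - 1 by
    push_cast; nlinarith]
  rw [Nc_zero_of_neg s.length (goldenVal s - 1 - 1) (by linarith)]
  rw [DD]; omega

lemma QQ_cons1 : QQ (1 :: s) = FF s + DD s := by
  have h := gr_sq
  rw [QQ, len_cons, Nc_succ, mul_sub, gr_mul_val_cons]
  rw [show (1:ℕ) + goldenVal s - gr * (gr - 1) = goldenVal s by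
    push_cast; nlinarith]
  norm_num [FF, DD]

end Steps

/-! ### 0-1 words -/

lemma h01_append {s t : List ℕ} (hs : ∀ x ∈ s, x ≤ 1) (ht : ∀ x ∈ t, x ≤ 1) :
    ∀ x ∈ s ++ t, x ≤ 1 := by
  intro x hx
  rcases List.mem_append.mp hx with h | h
  exacts [hs x h, ht x h]

lemma h01_flatten_replicate (a : ℕ) (c : List ℕ) (hc : ∀ x ∈ c, x ≤ 1) :
    ∀ x ∈ (List.replicate a c).flatten, x ≤ 1 := by
  intro x hx
  rcases List.mem_flatten.mp hx with ⟨l, hl, hxl⟩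
  rw [(List.mem_replicate.mp hl).2] at hxl
  exact hc x hxl

lemma h01_blockChunks (t : Bool) (as : List ℕ) : ∀ x ∈ blockChunks t as, x ≤ 1 := by
  induction as generalizing t with
  | nil => intro x hx; simp [blockChunks] at hx
  | cons a rest ih =>
    exact h01_append (h01_flatten_replicate a _ (by rcases t <;> simp)) (ih (!t))

lemma h01_cons {b : ℕ} (hb : b ≤ 1) {s : List ℕ} (h : ∀ x ∈ s, x ≤ 1) :
    ∀ x ∈ b :: s, x ≤ 1 := by
  intro x hx
  rcases List.mem_cons.mp hx with rfl | h'
  exacts [hb, h x h']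

lemma rep_succ (a : ℕ) (c s : List ℕ) :
    (List.replicate (a+1) c).flatten ++ s = c ++ ((List.replicate a c).flatten ++ s) := by
  rw [List.replicate_succ, List.flatten_cons, List.append_assoc]

/-! ### Chunk transfer lemmas -/

lemma chunk01 (a : ℕ) (s : List ℕ) (h01 : ∀ x ∈ s, x ≤ 1) :
    FF ((List.replicate (a+1) [0,1]).flatten ++ s) = FF s + (a+1)*(UU s + QQ s) ∧
    UU ((List.replicate (a+1) [0,1]).flatten ++ s) = UU s ∧
    DD ((List.replicate (a+1) [0,1]).flatten ++ s) = 0 ∧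
    PP ((List.replicate (a+1) [0,1]).flatten ++ s) = FF s + a*(UU s + QQ s) + UU s ∧
    QQ ((List.replicate (a+1) [0,1]).flatten ++ s) = QQ s := by
  induction a with
  | zero =>
    rw [rep_succ]
    have hw : (List.replicate 0 ([0,1] : List ℕ)).flatten ++ s = s := by simp
    rw [hw]
    show FF (0 :: 1 :: s) = _ ∧ UU (0 :: 1 :: s) = _ ∧ DD (0 :: 1 :: s) = _ ∧
      PP (0 :: 1 :: s) = _ ∧ QQ (0 :: 1 :: s) = _
    have h1 : ∀ x ∈ 1 :: s, x ≤ 1 := h01_cons le_rfl h01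
    simp only [FF_cons0, UU_cons0, DD_cons0 _ h1, PP_cons0, QQ_cons0 _ h1,
      FF_cons1, UU_cons1, DD_cons1 _ h01, PP_cons1, QQ_cons1]
    exact ⟨by ring, trivial, trivial, by ring, trivial⟩
  | succ a ih =>
    obtain ⟨hF, hU, hD, hP, hQ⟩ := ih
    set w' := (List.replicate (a+1) ([0,1] : List ℕ)).flatten ++ s with hw'
    have h01w' : ∀ x ∈ w', x ≤ 1 :=
      h01_append (h01_flatten_replicate _ _ (by simp)) h01
    have h1 : ∀ x ∈ 1 :: w', x ≤ 1 := h01_cons le_rfl h01w'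
    rw [rep_succ]
    show FF (0 :: 1 :: w') = _ ∧ UU (0 :: 1 :: w') = _ ∧ DD (0 :: 1 :: w') = _ ∧
      PP (0 :: 1 :: w') = _ ∧ QQ (0 :: 1 :: w') = _
    simp only [FF_cons0, UU_cons0, DD_cons0 _ h1, PP_cons0, QQ_cons0 _ h1,
      FF_cons1, UU_cons1, DD_cons1 _ h01w', PP_cons1, QQ_cons1,
      hF, hU, hD, hP, hQ]
    exact ⟨by ring, trivial, trivial, by ring, trivial⟩

lemma chunk00 (a : ℕ) (s : List ℕ) (h01 : ∀ x ∈ s, x ≤ 1) (hD : DD s = 0) :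
    FF ((List.replicate (a+1) [0,0]).flatten ++ s) = FF s ∧
    UU ((List.replicate (a+1) [0,0]).flatten ++ s) = (a+1)*FF s + UU s ∧
    DD ((List.replicate (a+1) [0,0]).flatten ++ s) = 0 ∧
    PP ((List.replicate (a+1) [0,0]).flatten ++ s) = (a+1)*FF s + PP s ∧
    QQ ((List.replicate (a+1) [0,0]).flatten ++ s) = 0 := by
  induction a with
  | zero =>
    rw [rep_succ]
    have hw : (List.replicate 0 ([0,0] : List ℕ)).flatten ++ s = s := by simp
    rw [hw]
    show FF (0 :: 0 :: s) = _ ∧ UU (0 :: 0 :: s) = _ ∧ DD (0 :: 0 :: s) = _ ∧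
      PP (0 :: 0 :: s) = _ ∧ QQ (0 :: 0 :: s) = _
    have h0 : ∀ x ∈ 0 :: s, x ≤ 1 := h01_cons (by norm_num) h01
    simp only [FF_cons0, UU_cons0, DD_cons0 _ h0, PP_cons0, QQ_cons0 _ h0,
      DD_cons0 _ h01, QQ_cons0 _ h01, hD]
    exact ⟨by ring, by ring, trivial, by ring, trivial⟩
  | succ a ih =>
    obtain ⟨hF, hU, hD', hP, hQ⟩ := ih
    set w' := (List.replicate (a+1) ([0,0] : List ℕ)).flatten ++ s with hw'
    have h01w' : ∀ x ∈ w', x ≤ 1 :=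
      h01_append (h01_flatten_replicate _ _ (by simp)) h01
    have h0 : ∀ x ∈ 0 :: w', x ≤ 1 := h01_cons (by norm_num) h01w'
    rw [rep_succ]
    show FF (0 :: 0 :: w') = _ ∧ UU (0 :: 0 :: w') = _ ∧ DD (0 :: 0 :: w') = _ ∧
      PP (0 :: 0 :: w') = _ ∧ QQ (0 :: 0 :: w') = _
    simp only [FF_cons0, UU_cons0, DD_cons0 _ h0, PP_cons0, QQ_cons0 _ h0,
      DD_cons0 _ h01w', QQ_cons0 _ h01w', hF, hU, hD', hP, hQ]
    exact ⟨by ring, by ring, trivial, by ring, trivial⟩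

/-! ### The main induction -/

lemma main_induction (as : List ℕ) (hpos : ∀ a ∈ as, 1 ≤ a) :
    ((Even as.length ∧ as ≠ []) → FF (blockChunks true as) = cont as ∧
        UU (blockChunks true as) = cont as.tail ∧ DD (blockChunks true as) = 0 ∧
        PP (blockChunks true as) = cont as ∧ QQ (blockChunks true as) = 0) ∧
    (Odd as.length → FF (blockChunks false as) = cont as.tail ∧
        UU (blockChunks false as) = cont as ∧ QQ (blockChunks false as) = 0) := by
  induction as with
  | nil =>
    constructor
    · rintro ⟨-, h⟩; exact absurd rfl h
    · intro h; rw [List.length_nil, Nat.odd_iff] at h; omega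
  | cons a rest ih =>
    have hpos' : ∀ x ∈ rest, 1 ≤ x := fun x hx => hpos x (List.mem_cons_of_mem a hx)
    obtain ⟨a', rfl⟩ : ∃ a', a = a' + 1 :=
      ⟨a - 1, by have := hpos a List.mem_cons_self; omega⟩
    constructor
    · rintro ⟨heven, -⟩
      have hodd : Odd rest.length := by
        rw [List.length_cons, Nat.even_add_one] at heven
        exact Nat.not_even_iff_odd.mp heven
      obtain ⟨hF, hU, hQ⟩ := (ih hpos').2 hodd
      obtain ⟨b, r, rfl⟩ : ∃ b r, rest = b :: r := by
        rcases rest with - | ⟨b, r⟩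
        · rw [List.length_nil, Nat.odd_iff] at hodd; omega
        · exact ⟨_, _, rfl⟩
      have hch : blockChunks true ((a'+1) :: b :: r)
          = (List.replicate (a'+1) [0,1]).flatten ++ blockChunks false (b :: r) := by
        simp [blockChunks]
      obtain ⟨cF, cU, cD, cP, cQ⟩ :=
        chunk01 a' (blockChunks false (b :: r)) (h01_blockChunks false (b :: r))
      rw [hch, cF, cU, cD, cP, cQ, hF, hU, hQ]
      refine ⟨?_, rfl, rfl, ?_, rfl⟩ <;> · simp only [cont, List.tail_cons]; ring
    · intro hodd
      have heven : Even rest.length := by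
        rw [List.length_cons, Nat.odd_add_one] at hodd
        exact Nat.not_odd_iff_even.mp hodd
      have hch : blockChunks false ((a'+1) :: rest)
          = (List.replicate (a'+1) [0,0]).flatten ++ blockChunks true rest := by
        simp [blockChunks]
      rcases rest with - | ⟨b, r⟩
      · have hnil : blockChunks true ([] : List ℕ) = [] := rfl
        obtain ⟨cF, cU, cD, cP, cQ⟩ := chunk00 a' [] (by simp) DD_nil
        rw [hch, hnil, cF, cU, cQ, FF_nil, UU_nil]
        refine ⟨rfl, ?_, rfl⟩
        show (a' + 1) * 1 + 0 = cont [a' + 1]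
        simp only [cont]; ring
      · obtain ⟨hF, hU, hD, hP, hQ⟩ := (ih hpos').1 ⟨heven, List.cons_ne_nil b r⟩
        obtain ⟨cF, cU, cD, cP, cQ⟩ :=
          chunk00 a' (blockChunks true (b :: r)) (h01_blockChunks true (b :: r)) hD
        rw [hch, cF, cU, cQ, hF, hU]
        refine ⟨rfl, ?_, rfl⟩
        show (a' + 1) * cont (b :: r) + cont (b :: r).tail = cont ((a'+1) :: b :: r)
        simp only [cont, List.tail_cons]

/-- the equivalence class of the block `B(a_1,…,a_r)` has cardinality
`p_r + q_r`, where `p_r/q_r = [a_1,…,a_r]` is the finite continued fraction. (The parity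
hypothesis says the last chunk is of type `00`, so that the word is indeed a block.) -/
theorem block_eqClassCard_eq_continuant (t : Bool) (as : List ℕ)
    (hne : as ≠ []) (hpos : ∀ a ∈ as, 1 ≤ a)
    (hpar : if t then Even as.length else Odd as.length) :
    eqClassCard (blockWord t as) = cont as.tail + cont as := by
  have hstart : eqClassCard (blockWord t as) = FF (blockWord t as) := rfl
  rw [hstart, show blockWord t as = 1 :: blockChunks t as from rfl, FF_cons1]
  cases t with
  | true =>
    obtain ⟨hF, hU, -, -, -⟩ := (main_induction as hpos).1 ⟨by simpa using hpar, hne⟩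
    rw [hF, hU]
  | false =>
    obtain ⟨hF, hU, -⟩ := (main_induction as hpos).2 (by simpa using hpar)
    rw [hF, hU]; omega
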